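/- A set E ⊆ ℝ^d is uniformly porous if and only if there exist a constant C ≥ 1 and an exponent s ∈ (0,d) such that for every x ∈ E and all radii 0 < r < R < 2·diam(E) the set E ∩ B(x,R) can be covered by at most C·(R/r)^s balls of radius r centered at points of E (the latter condition says that the upper Assouad dimension of E is strictly less than d). -/

import Mathlib

open MeasureTheory Metric

namespace PorAux

lemma floor_abs_le {u v : ℝ} {c : ℤ} (h : |u - v| ≤ c) : |⌊u⌋ - ⌊v⌋| ≤ c := by
  rw [abs_le] at h ⊢
  constructor
  · have : ⌊v⌋ ≤ ⌊u + c⌋ := Int.floor_le_floor (by linarith [h.1])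
    rw [Int.floor_add_intCast] at this; omega
  · have : ⌊u⌋ ≤ ⌊v + c⌋ := Int.floor_le_floor (by linarith [h.2])
    rw [Int.floor_add_intCast] at this; omega

lemma abs_lt_of_floor {u v : ℝ} {c : ℤ} (h : |⌊u⌋ - ⌊v⌋| ≤ c) : |u - v| < c + 1 := by
  rw [abs_le] at h
  have h1 := Int.floor_le u
  have h2 := Int.lt_floor_add_one u
  have h3 := Int.floor_le v
  have h4 := Int.lt_floor_add_one v
  have c1 : ((⌊u⌋ : ℝ)) ≤ (⌊v⌋ : ℝ) + c := by exact_mod_cast by omega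
  have c2 : ((⌊v⌋ : ℝ)) ≤ (⌊u⌋ : ℝ) + c := by exact_mod_cast by omega
  rw [abs_lt]; constructor <;> push_cast at * <;> linarith

lemma floor_scale_le {u v t : ℝ} (ht : 0 < t) {c : ℤ} (h : |u - v| ≤ c * t) :
    |⌊u / t⌋ - ⌊v / t⌋| ≤ c := by
  apply floor_abs_le
  rw [div_sub_div_same, abs_div, abs_of_pos ht, div_le_iff₀ ht]
  exact h

lemma abs_scale_lt {u v t : ℝ} (ht : 0 < t) {c : ℤ} (h : |⌊u / t⌋ - ⌊v / t⌋| ≤ c) :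
    |u - v| < (c + 1) * t := by
  have h2 := abs_lt_of_floor h
  have h3 : |u / t - v / t| < (c:ℝ) + 1 := by push_cast at h2 ⊢; linarith
  rw [div_sub_div_same, abs_div, abs_of_pos ht, div_lt_iff₀ ht] at h3
  linarith

lemma floor_floor_div (z : ℝ) (n : ℕ) (hn : 0 < n) : ⌊((⌊z⌋ : ℝ)) / n⌋ = ⌊z / n⌋ := by
  have hn' : (0:ℝ) < n := by exact_mod_cast hn
  set q := ⌊((⌊z⌋ : ℝ)) / n⌋ with hq
  have h1 : (q : ℝ) ≤ ((⌊z⌋:ℝ)) / n := Int.floor_le _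
  have h2 : ((⌊z⌋:ℝ)) / n < q + 1 := Int.lt_floor_add_one _
  have h1' : (q:ℝ) * n ≤ ((⌊z⌋:ℝ)) := by rw [← le_div_iff₀ hn']; exact h1
  have h2' : ((⌊z⌋:ℝ)) < (q+1) * n := by rw [← div_lt_iff₀ hn']; push_cast; push_cast at h2; linarith
  have h2i : ⌊z⌋ < (q+1) * n := by exact_mod_cast h2'
  have h2ii : (⌊z⌋:ℝ) + 1 ≤ ((q+1) * n : ℤ) := by exact_mod_cast h2i
  symm
  rw [Int.floor_eq_iff]
  constructor
  · rw [le_div_iff₀ hn']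
    calc (q:ℝ) * n ≤ ((⌊z⌋:ℝ)) := h1'
      _ ≤ z := Int.floor_le z
  · rw [div_lt_iff₀ hn']
    have := Int.lt_floor_add_one z
    push_cast at h2ii ⊢
    linarith

lemma norm_le_of_coords {d : ℕ} (v : EuclideanSpace ℝ (Fin d)) {a : ℝ} (ha : 0 ≤ a)
    (h : ∀ i, |v i| ≤ a) : ‖v‖ ≤ Real.sqrt d * a := by
  rw [EuclideanSpace.norm_eq]
  have : ∑ i, ‖v i‖ ^ 2 ≤ d * a ^ 2 := by
    calc ∑ i, ‖v i‖ ^ 2 ≤ ∑ _i : Fin d, a ^ 2 := by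
          apply Finset.sum_le_sum
          intro i _
          have := h i
          rw [Real.norm_eq_abs]
          nlinarith [abs_nonneg (v i)]
      _ = d * a ^ 2 := by simp [mul_comm]
  calc Real.sqrt (∑ i, ‖v i‖ ^ 2) ≤ Real.sqrt (d * a ^ 2) := Real.sqrt_le_sqrt this
    _ = Real.sqrt d * a := by
        rw [Real.sqrt_mul (by positivity), Real.sqrt_sq ha]

lemma coord_le_norm {d : ℕ} (v : EuclideanSpace ℝ (Fin d)) (i : Fin d) : |v i| ≤ ‖v‖ := by
  rw [EuclideanSpace.norm_eq]
  rw [← Real.sqrt_sq (abs_nonneg (v i))]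
  apply Real.sqrt_le_sqrt
  rw [sq_abs]
  calc (v i)^2 = ‖v i‖^2 := by rw [Real.norm_eq_abs, sq_abs]
        _ ≤ ∑ j, ‖v j‖ ^ 2 := Finset.single_le_sum (f := fun j => ‖v j‖^2) (fun j _ => by positivity) (Finset.mem_univ i)

lemma sub_apply' {d : ℕ} (u v : EuclideanSpace ℝ (Fin d)) (i : Fin d) : (u - v) i = u i - v i := rfl

noncomputable def box {d : ℕ} (c : Fin d → ℤ) (B : ℕ) : Finset (Fin d → ℤ) :=
  Fintype.piFinset fun i => Finset.Icc (c i - B) (c i + B)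

lemma mem_box {d : ℕ} {c : Fin d → ℤ} {B : ℕ} {m : Fin d → ℤ} :
    m ∈ box c B ↔ ∀ i, |m i - c i| ≤ B := by
  simp only [box, Fintype.mem_piFinset, Finset.mem_Icc, abs_le]
  constructor <;> intro h i <;> have := h i <;> omega

lemma card_box {d : ℕ} (c : Fin d → ℤ) (B : ℕ) : (box c B).card = (2*B+1)^d := by
  rw [box, Fintype.card_piFinset]
  have : ∀ i : Fin d, (Finset.Icc (c i - B) (c i + B)).card = 2*B+1 := by
    intro i; rw [Int.card_Icc]; omega
  simp [this]

noncomputable def idx {d : ℕ} (t : ℝ) (z : EuclideanSpace ℝ (Fin d)) : Fin d → ℤ := fun i => ⌊z i / t⌋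

noncomputable def pmap {d : ℕ} (n : ℕ) (m : Fin d → ℤ) : Fin d → ℤ := fun i => ⌊((m i : ℝ)) / (n : ℝ)⌋

def gset {d : ℕ} (E : Set (EuclideanSpace ℝ (Fin d))) (x : EuclideanSpace ℝ (Fin d))
    (R t : ℝ) : Set (Fin d → ℤ) :=
  {m | ∃ w ∈ E ∩ Metric.closedBall x (2*R), ∀ i, |idx t w i - m i| ≤ 2}

lemma gset_finite {d : ℕ} {E : Set (EuclideanSpace ℝ (Fin d))} {x : EuclideanSpace ℝ (Fin d)}
    {R t : ℝ} (ht : 0 < t) (hR : 0 < R) : (gset E x R t).Finite := by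
  apply Set.Finite.subset (Finset.finite_toSet (box (idx t x) (⌈2*R/t⌉₊ + 2)))
  rintro m ⟨w, ⟨hwE, hwB⟩, hm⟩
  rw [Finset.mem_coe, mem_box]
  intro i
  have hcoord : |w i - x i| ≤ (⌈2*R/t⌉₊ : ℝ) * t := by
    have h1 : |w i - x i| ≤ ‖w - x‖ := by
      have := coord_le_norm (w - x) i; rwa [sub_apply'] at this
    have h2 : ‖w - x‖ ≤ 2*R := by rw [← dist_eq_norm]; exact Metric.mem_closedBall.mp hwB
    have h3 : 2*R ≤ (⌈2*R/t⌉₊ : ℝ) * t := by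
      rw [← div_le_iff₀ ht]; exact Nat.le_ceil _
    linarith
  have := floor_scale_le (u := w i) (v := x i) ht (c := (⌈2*R/t⌉₊ : ℤ)) (by exact_mod_cast hcoord)
  have hm' := hm i
  simp only [idx] at this hm'
  have : |m i - idx t x i| ≤ (⌈2*R/t⌉₊ : ℤ) + 2 := by
    simp only [idx]
    have := abs_sub_le (m i) (⌊w i / t⌋) (⌊x i / t⌋)
    rw [abs_sub_comm] at hm'
    omega
  simp only [idx] at this ⊢
  push_cast
  omega

noncomputable def fiberF {d : ℕ} (n : ℕ) (q : Fin d → ℤ) : Finset (Fin d → ℤ) :=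
  Fintype.piFinset fun i => Finset.Ico (q i * n) (q i * n + n)

lemma mem_fiberF {d : ℕ} {n : ℕ} (hn : 0 < n) {q m : Fin d → ℤ} :
    m ∈ fiberF n q ↔ pmap n m = q := by
  have hn' : (0:ℝ) < n := by exact_mod_cast hn
  simp only [fiberF, Fintype.mem_piFinset, Finset.mem_Ico, pmap, funext_iff]
  apply forall_congr'; intro i
  constructor
  · rintro ⟨h1, h2⟩
    have h1' : ((q i : ℝ)) * n ≤ m i := by exact_mod_cast h1
    have h2' : ((m i : ℝ)) < (q i : ℝ) * n + n := by exact_mod_cast h2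
    rw [Int.floor_eq_iff, le_div_iff₀ hn', div_lt_iff₀ hn']
    push_cast
    constructor <;> linarith
  · intro h
    have h1 := Int.floor_le ((m i : ℝ) / n)
    have h2 := Int.lt_floor_add_one ((m i : ℝ) / n)
    rw [h] at h1 h2
    rw [le_div_iff₀ hn'] at h1
    rw [div_lt_iff₀ hn'] at h2
    constructor
    · exact_mod_cast h1
    · exact_mod_cast (by push_cast at h2 ⊢; linarith : ((m i:ℝ)) < (q i:ℝ) * n + n)

lemma card_fiberF {d : ℕ} (n : ℕ) (q : Fin d → ℤ) : (fiberF n q).card = n^d := by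
  rw [fiberF, Fintype.card_piFinset]
  have : ∀ i : Fin d, (Finset.Ico (q i * n) (q i * n + n)).card = n := by
    intro i; rw [Int.card_Ico]; omega
  simp [this]

lemma pmap_idx {d : ℕ} {t : ℝ} (ht : 0 < t) {n : ℕ} (hn : 0 < n)
    (y : EuclideanSpace ℝ (Fin d)) : pmap n (idx (t/n) y) = idx t y := by
  have hn' : (0:ℝ) < n := by exact_mod_cast hn
  funext i
  simp only [pmap, idx]
  rw [floor_floor_div _ _ hn]
  congr 1
  field_simp

lemma gset_mono {d : ℕ} {E : Set (EuclideanSpace ℝ (Fin d))} {x : EuclideanSpace ℝ (Fin d)}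
    {R t : ℝ} (ht : 0 < t) {n : ℕ} (hn : 0 < n) {m : Fin d → ℤ}
    (hm : m ∈ gset E x R (t/n)) : pmap n m ∈ gset E x R t := by
  have hn' : (0:ℝ) < n := by exact_mod_cast hn
  obtain ⟨w, hw, hcl⟩ := hm
  refine ⟨w, hw, fun i => ?_⟩
  have h1 : idx t w i = pmap n (idx (t/n) w) i := by rw [pmap_idx ht hn]
  rw [h1]
  simp only [pmap]
  have h2 : |((idx (t/n) w i : ℝ)) - ((m i : ℝ))| ≤ (2:ℤ) * (n:ℝ) := by
    have := hcl i
    have h3 : |((idx (t/n) w i : ℝ)) - ((m i : ℝ))| ≤ 2 := by exact_mod_cast this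
    have hone : (1:ℝ) ≤ n := by exact_mod_cast hn
    have : (2:ℝ) ≤ 2 * n := by linarith
    push_cast
    linarith
  exact floor_scale_le hn' h2

theorem step_lemma {d : ℕ} {E : Set (EuclideanSpace ℝ (Fin d))} {κ : ℝ}
    (hκ : 0 < κ)
    (hpor : ∀ x ∈ E, ∀ r : ℝ, 0 < r → ENNReal.ofReal r ≤ EMetric.diam E →
      ∃ y ∈ Metric.ball x r, Metric.ball y (κ * r) ∩ E = ∅)
    (x : EuclideanSpace ℝ (Fin d)) {R t : ℝ} (hR : 0 < R) (ht : 0 < t)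
    {n : ℕ} (hn2 : 2 ≤ n) (hnκ : 6 * Real.sqrt d / κ < n)
    (hdiam : ENNReal.ofReal (t/2) ≤ EMetric.diam E) :
    7^d * (gset E x R (t/n)).ncard + (gset E x R t).ncard
      ≤ 7^d * n^d * (gset E x R t).ncard := by
  classical
  have hn : 0 < n := by omega
  have hn' : (0:ℝ) < n := by exact_mod_cast hn
  have htn : 0 < t / n := by positivity
  have hGfin := gset_finite (E := E) (x := x) ht hR
  have hG'fin := gset_finite (E := E) (x := x) htn hR
  set GF := hGfin.toFinset with hGF
  set G'F := hG'fin.toFinset with hG'F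
  -- kill construction
  have hkill : ∀ m ∈ GF, ∃ mk : Fin d → ℤ,
      mk ∉ gset E x R (t/n) ∧ (∀ i, |pmap n mk i - m i| ≤ 3) ∧ pmap n mk ∈ gset E x R t := by
    intro m hm
    rw [hGF, Set.Finite.mem_toFinset] at hm
    obtain ⟨w, ⟨hwE, hwB⟩, hcl⟩ := hm
    obtain ⟨y, hy, hhole⟩ := hpor w hwE (t/2) (by positivity) hdiam
    refine ⟨idx (t/n) y, ?_, ?_, ?_⟩
    · -- killed cube not in G'
      rintro ⟨w', ⟨hw'E, _⟩, hcl'⟩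
      have hclose : ∀ i, |w' i - y i| < 3 * (t/n) := by
        intro i
        have h1 := hcl' i
        have := abs_scale_lt (u := w' i) (v := y i) htn (c := 2) (by
          simp only [idx] at h1 ⊢
          exact h1)
        norm_num at this
        convert this using 2
      have hnorm : ‖w' - y‖ ≤ Real.sqrt d * (3 * (t/n)) :=
        norm_le_of_coords _ (by positivity) (fun i => by
          rw [sub_apply']; exact le_of_lt (hclose i))
      have hlt : Real.sqrt d * (3 * (t/n)) < κ * (t/2) := by
        rw [div_lt_iff₀ hκ] at hnκ
        have h6 : 6 * Real.sqrt d < κ * n := by linarith [hnκ]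
        rw [div_eq_mul_inv]
        have h7 : Real.sqrt d * (3 * (t * (n:ℝ)⁻¹)) = (6 * Real.sqrt d) * t / (2 * n) := by
          field_simp; ring
        rw [h7]
        rw [div_lt_iff₀ (by positivity)]
        calc 6 * Real.sqrt d * t < (κ * n) * t := by nlinarith
          _ = κ * (t/2) * (2*n) := by ring
      have : w' ∈ Metric.ball y (κ * (t/2)) := by
        rw [Metric.mem_ball, dist_eq_norm]
        linarith
      have : w' ∈ Metric.ball y (κ * (t/2)) ∩ E := ⟨this, hw'E⟩
      rw [hhole] at this
      exact this
    · -- closeness to m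
      intro i
      rw [pmap_idx ht hn]
      have h1 : |idx t y i - idx t w i| ≤ 1 := by
        have hyw : |y i - w i| ≤ (1:ℤ) * t := by
          have h2 : |y i - w i| ≤ ‖y - w‖ := by
            have := coord_le_norm (y - w) i; rwa [sub_apply'] at this
          have h3 : ‖y - w‖ < t/2 := by rw [← dist_eq_norm]; exact Metric.mem_ball.mp hy
          push_cast
          linarith
        exact floor_scale_le ht hyw
      have h2 := hcl i
      have := abs_sub_le (idx t y i) (idx t w i) (m i)
      omega
    · -- parent in G
      rw [pmap_idx ht hn]
      refine ⟨w, ⟨hwE, hwB⟩, fun i => ?_⟩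
      have hyw : |y i - w i| ≤ (1:ℤ) * t := by
        have h2 : |y i - w i| ≤ ‖y - w‖ := by
          have := coord_le_norm (y - w) i; rwa [sub_apply'] at this
        have h3 : ‖y - w‖ < t/2 := by rw [← dist_eq_norm]; exact Metric.mem_ball.mp hy
        push_cast
        linarith
      have := floor_scale_le ht hyw
      simp only [idx] at this ⊢
      rw [abs_sub_comm] at this
      omega
  choose! f hf1 hf2 hf3 using hkill
  set K := GF.image f with hK
  set childrenF := GF.biUnion (fiberF n) with hch
  have hchcard : childrenF.card = n^d * GF.card := by
    rw [hch, Finset.card_biUnion]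
    · simp [card_fiberF, Finset.sum_const, mul_comm]
    · intro a ha b hb hab
      rw [Function.onFun, Finset.disjoint_left]
      intro m hma hmb
      rw [mem_fiberF hn] at hma hmb
      exact hab (hma ▸ hmb ▸ rfl)
  have hmemGF : ∀ m : Fin d → ℤ, m ∈ GF ↔ m ∈ gset E x R t := fun m =>
    Set.Finite.mem_toFinset _
  have hmemG'F : ∀ m : Fin d → ℤ, m ∈ G'F ↔ m ∈ gset E x R (t/n) := fun m =>
    Set.Finite.mem_toFinset _
  have hG'sub : G'F ⊆ childrenF := by
    intro m hm
    rw [hmemG'F] at hm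
    rw [hch, Finset.mem_biUnion]
    exact ⟨pmap n m, (hmemGF _).mpr (gset_mono ht hn hm), (mem_fiberF hn).mpr rfl⟩
  have hKsub : K ⊆ childrenF := by
    intro a ha
    rw [hK, Finset.mem_image] at ha
    obtain ⟨m, hm, rfl⟩ := ha
    rw [hch, Finset.mem_biUnion]
    exact ⟨pmap n (f m), (hmemGF _).mpr (hf3 m hm), (mem_fiberF hn).mpr rfl⟩
  have hdisj : Disjoint G'F K := by
    rw [Finset.disjoint_right]
    intro a ha
    rw [hK, Finset.mem_image] at ha
    obtain ⟨m, hm, rfl⟩ := ha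
    rw [hmemG'F]
    exact hf1 m hm
  have hGK : GF.card ≤ 7^d * K.card := by
    rw [hK]
    apply Finset.card_le_mul_card_image
    intro b hb
    calc (GF.filter (fun a => f a = b)).card ≤ (box (pmap n b) 3).card := by
          apply Finset.card_le_card
          intro m hm
          rw [Finset.mem_filter] at hm
          obtain ⟨hmG, hfm⟩ := hm
          rw [mem_box]
          intro i
          have := hf2 m hmG i
          rw [hfm] at this
          rw [abs_sub_comm] at this
          exact_mod_cast this
      _ = 7^d := by rw [card_box]
  have hcards : G'F.card + K.card ≤ childrenF.card := by
    rw [← Finset.card_union_of_disjoint hdisj]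
    exact Finset.card_le_card (Finset.union_subset hG'sub hKsub)
  have e1 : (gset E x R (t/n)).ncard = G'F.card := by
    exact Set.ncard_eq_toFinset_card _ hG'fin
  have e2 : (gset E x R t).ncard = GF.card := by
    exact Set.ncard_eq_toFinset_card _ hGfin
  rw [e1, e2]
  rw [hchcard] at hcards
  calc 7^d * G'F.card + GF.card ≤ 7^d * G'F.card + 7^d * K.card := by omega
    _ = 7^d * (G'F.card + K.card) := by ring
    _ ≤ 7^d * (n^d * GF.card) := by
        exact Nat.mul_le_mul_left _ hcards
    _ = 7^d * n^d * GF.card := by ring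

lemma gset_base {d : ℕ} {E : Set (EuclideanSpace ℝ (Fin d))} {x : EuclideanSpace ℝ (Fin d)}
    {R : ℝ} (hR : 0 < R) : (gset E x R R).ncard ≤ 9^d := by
  have hsub : gset E x R R ⊆ (box (idx R x) 4 : Finset _) := by
    rintro m ⟨w, ⟨hwE, hwB⟩, hcl⟩
    rw [Finset.mem_coe, mem_box]
    intro i
    have h1 : |w i - x i| ≤ (2:ℤ) * R := by
      have ha := coord_le_norm (w - x) i
      rw [sub_apply'] at ha
      have hb : ‖w - x‖ ≤ 2*R := by rw [← dist_eq_norm]; exact Metric.mem_closedBall.mp hwB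
      push_cast
      linarith
    have h2 := floor_scale_le hR h1
    have h3 := hcl i
    simp only [idx] at h2 h3 ⊢
    have := abs_sub_le (m i) (⌊w i / R⌋) (⌊x i / R⌋)
    rw [abs_sub_comm] at h3
    omega
  calc (gset E x R R).ncard ≤ ((box (idx R x) 4 : Finset _) : Set (Fin d → ℤ)).ncard :=
        Set.ncard_le_ncard hsub (Finset.finite_toSet _)
    _ = (box (idx R x) 4).card := Set.ncard_coe_finset _
    _ = 9^d := by rw [card_box]

lemma ofReal_half_le_diam {α : Type*} [PseudoEMetricSpace α] {E : Set α} {R t : ℝ}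
    (ht : 0 < t) (htR : t ≤ R) (hRd : ENNReal.ofReal R < 2 * EMetric.diam E) :
    ENNReal.ofReal (t/2) ≤ EMetric.diam E := by
  rcases eq_top_or_lt_top (EMetric.diam E) with h | h
  · rw [h]; exact le_top
  · set D := (EMetric.diam E).toReal with hD
    have hDe : EMetric.diam E = ENNReal.ofReal D := by
      rw [hD, ENNReal.ofReal_toReal h.ne]
    rw [hDe] at hRd ⊢
    have hD0 : 0 ≤ D := ENNReal.toReal_nonneg
    have h2 : (2 : ENNReal) * ENNReal.ofReal D = ENNReal.ofReal (2*D) := by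
      rw [ENNReal.ofReal_mul (by norm_num)]
      norm_num
    rw [h2] at hRd
    have hRD : R < 2*D := by
      by_cases hD0' : 0 < 2*D
      · exact (ENNReal.ofReal_lt_ofReal_iff hD0').mp hRd
      · exfalso
        have : ENNReal.ofReal (2*D) = 0 := by
          rw [ENNReal.ofReal_eq_zero]; linarith [not_lt.mp hD0']
        rw [this] at hRd
        simp at hRd
    apply ENNReal.ofReal_le_ofReal
    linarith

set_option maxHeartbeats 2000000 in
theorem forward_dir {d : ℕ} (hd : 1 ≤ d) {E : Set (EuclideanSpace ℝ (Fin d))} {κ : ℝ}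
    (hκ : 0 < κ) (hκ1 : κ ≤ 1)
    (hpor : ∀ x ∈ E, ∀ r : ℝ, 0 < r → ENNReal.ofReal r ≤ EMetric.diam E →
      ∃ y ∈ Metric.ball x r, Metric.ball y (κ * r) ∩ E = ∅) :
    ∃ C s : ℝ, 1 ≤ C ∧ 0 < s ∧ s < d ∧
      ∀ x ∈ E, ∀ r R : ℝ, 0 < r → r < R → ENNReal.ofReal R < 2 * EMetric.diam E →
        ∃ T : Finset (EuclideanSpace ℝ (Fin d)),
          (T : Set (EuclideanSpace ℝ (Fin d))) ⊆ E ∧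
          E ∩ Metric.ball x R ⊆ ⋃ y ∈ T, Metric.ball y r ∧ (T.card : ℝ) ≤ C * (R / r) ^ s := by
  classical
  have hsd1 : 1 ≤ Real.sqrt d := by
    rw [show (1:ℝ) = Real.sqrt 1 by simp]
    exact Real.sqrt_le_sqrt (by exact_mod_cast hd)
  obtain ⟨n, hn2, hnκ⟩ : ∃ n : ℕ, 2 ≤ n ∧ 6 * Real.sqrt d / κ < n := by
    refine ⟨2 + ⌈6 * Real.sqrt d / κ⌉₊, by omega, ?_⟩
    have h1 := Nat.le_ceil (6 * Real.sqrt d / κ)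
    push_cast
    linarith
  have hn : 0 < n := by omega
  have hn' : (0:ℝ) < n := by exact_mod_cast hn
  have hn1' : (1:ℝ) < n := by exact_mod_cast (by omega : 1 < n)
  -- θ and s
  have h7pos : (0:ℝ) < 7^d := by positivity
  have hnd2 : 2 ≤ n^d := by
    calc 2 = 2^1 := rfl
      _ ≤ 2^d := Nat.pow_le_pow_right (by norm_num) hd
      _ ≤ n^d := Nat.pow_le_pow_left hn2 d
  have h27 : (2:ℕ) ≤ 7^d := by
    calc (2:ℕ) = 2^1 := rfl
      _ ≤ 2^d := Nat.pow_le_pow_right (by norm_num) hd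
      _ ≤ 7^d := Nat.pow_le_pow_left (by norm_num) d
  have hstep_nat : 7^d + 2 ≤ 7^d * n^d := by
    calc 7^d + 2 ≤ 7^d + 7^d := by omega
      _ = 7^d * 2 := by ring
      _ ≤ 7^d * n^d := Nat.mul_le_mul_left _ hnd2
  have hB1 : (1:ℕ) ≤ 7^d * n^d := le_trans (by omega) hstep_nat
  set θ : ℝ := ((7^d * n^d - 1 : ℕ) : ℝ) / ((7^d : ℕ) : ℝ) with hθ_def
  have hθ1 : 1 < θ := by
    rw [hθ_def, lt_div_iff₀ (by exact_mod_cast h7pos)]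
    have : (7:ℕ)^d + 1 ≤ 7^d * n^d - 1 := by
      have h := hstep_nat
      set A := (7:ℕ)^d
      set B := (7:ℕ)^d * n^d
      omega
    have := (Nat.cast_le (α := ℝ)).mpr this
    push_cast at this ⊢
    linarith
  have hθpos : 0 < θ := by linarith
  have hθn : θ < ((n:ℝ))^d := by
    rw [hθ_def, div_lt_iff₀ (by exact_mod_cast h7pos)]
    have h1 : (7^d * n^d - 1 : ℕ) < 7^d * n^d := by
      set B := (7:ℕ)^d * n^d
      omega
    have h2 := (Nat.cast_lt (α := ℝ)).mpr h1
    push_cast at h2 ⊢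
    nlinarith [h2]
  set s : ℝ := Real.logb n θ with hs_def
  have hs0 : 0 < s := Real.logb_pos hn1' hθ1
  have hsd : s < d := by
    rw [hs_def]
    have := (Real.logb_lt_iff_lt_rpow hn1' hθpos).mpr
      (by rw [Real.rpow_natCast]; exact hθn)
    exact this
  have hns : (n:ℝ) ^ s = θ := Real.rpow_logb hn' (by linarith) hθpos
  set C : ℝ := 9^d * ((n:ℝ) * Real.sqrt d)^d with hC_def
  have hnsd1 : (1:ℝ) ≤ (n:ℝ) * Real.sqrt d := by nlinarith
  have hC1 : 1 ≤ C := by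
    rw [hC_def]
    have h1 : (1:ℝ) ≤ 9^d := one_le_pow₀ (by norm_num)
    have h2 : (1:ℝ) ≤ ((n:ℝ) * Real.sqrt d)^d := one_le_pow₀ hnsd1
    nlinarith
  refine ⟨C, s, hC1, hs0, hsd, ?_⟩
  intro x hx r R hr hrR hRd
  have hR : 0 < R := lt_trans hr hrR
  -- the induction
  have hmain : ∀ k : ℕ, ((gset E x R (R/(n:ℝ)^k)).ncard : ℝ) ≤ 9^d * θ^k := by
    intro k
    induction k with
    | zero =>
      simp only [pow_zero, div_one]
      have := gset_base (E := E) (x := x) hR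
      calc ((gset E x R R).ncard : ℝ) ≤ ((9:ℕ)^d : ℝ) := by exact_mod_cast this
        _ = 9^d * θ^0 := by push_cast; ring
    | succ k ih =>
      set t : ℝ := R / (n:ℝ)^k with ht_def
      have ht : 0 < t := by rw [ht_def]; positivity
      have htR : t ≤ R := by
        rw [ht_def]
        apply div_le_self (le_of_lt hR)
        exact one_le_pow₀ (by linarith)
      have hdiam := ofReal_half_le_diam ht htR hRd
      have hstep := step_lemma hκ hpor x hR ht hn2 hnκ hdiam
      have htn : R / (n:ℝ)^(k+1) = t / n := by
        rw [ht_def, pow_succ]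
        field_simp
      rw [htn]
      have hcast : ((gset E x R t).ncard : ℝ) ≤ 9^d * θ^k := ih
      -- from ℕ step: 7^d * g' + g ≤ 7^d * n^d * g  ⟹  g' ≤ θ * g
      set g' := (gset E x R (t/n)).ncard
      set g := (gset E x R t).ncard
      have hreal : ((7:ℕ)^d : ℝ) * g' + g ≤ ((7:ℕ)^d * n^d : ℕ) * g := by
        exact_mod_cast hstep
      have hg' : (g' : ℝ) ≤ θ * g := by
        rw [hθ_def]
        rw [div_mul_eq_mul_div, le_div_iff₀ (by exact_mod_cast h7pos)]
        have h1 : ((7^d * n^d - 1 : ℕ) : ℝ) = ((7^d * n^d : ℕ) : ℝ) - 1 := by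
          push_cast [hB1]
          ring
        rw [h1]
        push_cast at hreal ⊢
        nlinarith [Nat.cast_nonneg (α := ℝ) g]
      calc (g' : ℝ) ≤ θ * g := hg'
        _ ≤ θ * (9^d * θ^k) := by
            apply mul_le_mul_of_nonneg_left hcast (le_of_lt hθpos)
        _ = 9^d * θ^(k+1) := by ring
  -- choose k
  have hex : ∃ k : ℕ, Real.sqrt d * R < r * (n:ℝ)^k := by
    obtain ⟨k, hk⟩ := pow_unbounded_of_one_lt (Real.sqrt d * R / r) hn1'
    exact ⟨k, by rwa [div_lt_iff₀ hr, mul_comm ((n:ℝ)^k) r] at hk⟩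
  obtain ⟨k, hkspec, hkmin0⟩ : ∃ k : ℕ, Real.sqrt d * R < r * (n:ℝ)^k ∧
      ∀ j, j < k → ¬(Real.sqrt d * R < r * (n:ℝ)^j) :=
    ⟨Nat.find hex, Nat.find_spec hex, fun j hj => Nat.find_min hex hj⟩
  have hkmin : (n:ℝ)^k ≤ (n:ℝ) * Real.sqrt d * (R/r) := by
    rcases Nat.eq_zero_or_pos k with hk0 | hkpos
    · rw [hk0, pow_zero]
      have hRr : 1 < R/r := (one_lt_div hr).mpr hrR
      nlinarith [hn1', hsd1, hRr]
    · obtain ⟨j, rfl⟩ : ∃ j, k = j + 1 := ⟨k - 1, by omega⟩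
      have hj := hkmin0 j (by omega)
      push_neg at hj
      rw [pow_succ]
      have : (n:ℝ)^j ≤ Real.sqrt d * R / r := by
        rw [le_div_iff₀ hr]
        calc (n:ℝ)^j * r = r * (n:ℝ)^j := by ring
          _ ≤ Real.sqrt d * R := hj
      calc (n:ℝ)^j * n = (n:ℝ) * (n:ℝ)^j := by ring
        _ ≤ (n:ℝ) * (Real.sqrt d * R / r) := by
            apply mul_le_mul_of_nonneg_left this (le_of_lt hn')
        _ = (n:ℝ) * Real.sqrt d * (R/r) := by ring
  set t : ℝ := R / (n:ℝ)^k with ht_def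
  have ht : 0 < t := by rw [ht_def]; positivity
  have hsdt : Real.sqrt d * t < r := by
    have h1 : Real.sqrt d * t = Real.sqrt d * R / (n:ℝ)^k := by rw [ht_def]; ring
    rw [h1, div_lt_iff₀ (by positivity)]
    linarith [hkspec]
  -- build T
  have hGfin := gset_finite (E := E) (x := x) (t := t) ht hR
  set S := hGfin.toFinset with hS_def
  set g : (Fin d → ℤ) → EuclideanSpace ℝ (Fin d) := fun m =>
    if h : ∃ e, e ∈ E ∩ Metric.ball x R ∧ idx t e = m then h.choose else x with hg_def
  set T := S.image g with hT_def
  refine ⟨T, ?_, ?_, ?_⟩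
  · -- T ⊆ E
    intro y hy
    rw [hT_def, Finset.coe_image] at hy
    obtain ⟨m, _, rfl⟩ := hy
    rw [hg_def]
    by_cases h : ∃ e, e ∈ E ∩ Metric.ball x R ∧ idx t e = m
    · simp only [dif_pos h]
      exact h.choose_spec.1.1
    · simp only [dif_neg h]
      exact hx
  · -- cover
    rintro e ⟨heE, heB⟩
    set m := idx t e with hm_def
    have hmS : m ∈ S := by
      rw [hS_def, Set.Finite.mem_toFinset]
      refine ⟨e, ⟨heE, ?_⟩, fun i => by simp [hm_def]⟩
      rw [Metric.mem_closedBall]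
      have := Metric.mem_ball.mp heB
      linarith
    have hex2 : ∃ e', e' ∈ E ∩ Metric.ball x R ∧ idx t e' = m := ⟨e, ⟨heE, heB⟩, rfl⟩
    have hgm : g m = hex2.choose := by rw [hg_def]; simp only [dif_pos hex2]
    obtain ⟨⟨he'E, he'B⟩, he'idx⟩ := hex2.choose_spec
    rw [Set.mem_iUnion₂]
    refine ⟨g m, Finset.mem_image_of_mem g hmS, ?_⟩
    rw [Metric.mem_ball, dist_eq_norm, hgm]
    have hcoords : ∀ i, |e i - hex2.choose i| ≤ t := by
      intro i
      have h1 : idx t hex2.choose = idx t e := he'idx.trans hm_def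
      have h1i : ⌊hex2.choose i / t⌋ = ⌊e i / t⌋ := by
        have h1f := congrFun h1 i
        simpa [idx] using h1f
      have h2 : |⌊e i / t⌋ - ⌊hex2.choose i / t⌋| ≤ (0:ℤ) := by
        rw [h1i, sub_self, abs_zero]
      have := abs_scale_lt ht h2
      push_cast at this
      linarith
    calc ‖e - hex2.choose‖ ≤ Real.sqrt d * t :=
          norm_le_of_coords _ (le_of_lt ht) (fun i => by rw [sub_apply']; exact hcoords i)
      _ < r := hsdt
  · -- cardinality
    have h1 : (T.card : ℝ) ≤ ((gset E x R t).ncard : ℝ) := by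
      have : T.card ≤ S.card := Finset.card_image_le
      have h2 : S.card = (gset E x R t).ncard := (Set.ncard_eq_toFinset_card _ hGfin).symm
      rw [← h2]
      exact_mod_cast this
    have h2 : ((gset E x R t).ncard : ℝ) ≤ 9^d * θ^k := hmain k
    have hθk : θ^k = ((n:ℝ)^k) ^ s := by
      rw [← hns]
      rw [← Real.rpow_natCast ((n:ℝ)^s) k, ← Real.rpow_natCast (n:ℝ) k,
        ← Real.rpow_mul (le_of_lt hn'), ← Real.rpow_mul (le_of_lt hn'), mul_comm]
    have hRr1 : (1:ℝ) ≤ R / r := le_of_lt ((one_lt_div hr).mpr hrR)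
    have h3 : ((n:ℝ)^k) ^ s ≤ ((n:ℝ) * Real.sqrt d * (R/r)) ^ s :=
      Real.rpow_le_rpow (by positivity) hkmin (le_of_lt hs0)
    have h4 : ((n:ℝ) * Real.sqrt d * (R/r)) ^ s
        = ((n:ℝ) * Real.sqrt d) ^ s * (R/r) ^ s :=
      Real.mul_rpow (by positivity) (by positivity)
    have h5 : ((n:ℝ) * Real.sqrt d) ^ s ≤ ((n:ℝ) * Real.sqrt d) ^ (d:ℝ) :=
      Real.rpow_le_rpow_of_exponent_le hnsd1 (le_of_lt hsd)
    have h6 : ((n:ℝ) * Real.sqrt d) ^ (d:ℝ) = ((n:ℝ) * Real.sqrt d) ^ d :=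
      Real.rpow_natCast _ d
    have hRrs : (0:ℝ) ≤ (R/r) ^ s := Real.rpow_nonneg (by positivity) s
    calc (T.card : ℝ) ≤ 9^d * θ^k := le_trans h1 h2
      _ = 9^d * ((n:ℝ)^k) ^ s := by rw [hθk]
      _ ≤ 9^d * (((n:ℝ) * Real.sqrt d) ^ s * (R/r) ^ s) := by
          rw [← h4]
          apply mul_le_mul_of_nonneg_left h3 (by positivity)
      _ ≤ 9^d * (((n:ℝ) * Real.sqrt d) ^ d * (R/r) ^ s) := by
          apply mul_le_mul_of_nonneg_left _ (by positivity)
          apply mul_le_mul_of_nonneg_right _ hRrs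
          rw [← h6]; exact h5
      _ = C * (R/r) ^ s := by rw [hC_def]; ring

set_option maxHeartbeats 2000000 in
theorem reverse_dir {d : ℕ} (hd : 1 ≤ d) {E : Set (EuclideanSpace ℝ (Fin d))}
    {C s : ℝ} (hC : 1 ≤ C) (hs0 : 0 < s) (hsd : s < d)
    (hcov : ∀ x ∈ E, ∀ r R : ℝ, 0 < r → r < R → ENNReal.ofReal R < 2 * EMetric.diam E →
      ∃ T : Finset (EuclideanSpace ℝ (Fin d)),
        (T : Set (EuclideanSpace ℝ (Fin d))) ⊆ E ∧
        E ∩ Metric.ball x R ⊆ ⋃ y ∈ T, Metric.ball y r ∧ (T.card : ℝ) ≤ C * (R / r) ^ s) :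
    ∃ κ : ℝ, 0 < κ ∧ κ ≤ 1 ∧ ∀ x ∈ E, ∀ r : ℝ, 0 < r → ENNReal.ofReal r ≤ EMetric.diam E →
      ∃ y ∈ Metric.ball x r, Metric.ball y (κ * r) ∩ E = ∅ := by
  classical
  set sd := Real.sqrt d with hsd_def
  have hsd1 : 1 ≤ sd := by
    rw [hsd_def, show (1:ℝ) = Real.sqrt 1 by simp]
    exact Real.sqrt_le_sqrt (by exact_mod_cast hd)
  have hsdpos : 0 < sd := by linarith
  set Γ : ℝ := C * 2^d * (16*sd)^d with hΓ_def
  have hΓ1 : 1 ≤ Γ := by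
    have h1 : (1:ℝ) ≤ 2^d := one_le_pow₀ (by norm_num)
    have h2 : (1:ℝ) ≤ (16*sd)^d := one_le_pow₀ (by linarith)
    have h3 : (1:ℝ) ≤ C * 2^d := by nlinarith
    rw [hΓ_def]
    nlinarith
  have hΓpos : 0 < Γ := by linarith
  have hds : 0 < (d:ℝ) - s := by linarith
  set κ₀ : ℝ := (2*Γ) ^ (-(1:ℝ)/((d:ℝ)-s)) with hκ₀_def
  have hκ₀pos : 0 < κ₀ := Real.rpow_pos_of_pos (by linarith) _
  set κ : ℝ := min κ₀ (1/(16*sd)) with hκ_def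
  have hκpos : 0 < κ := lt_min hκ₀pos (by positivity)
  have hκsd : κ ≤ 1/(16*sd) := min_le_right _ _
  have hκ1 : κ ≤ 1 := by
    have : 1/(16*sd) ≤ 1 := by
      rw [div_le_one (by linarith)]; linarith
    linarith
  have hkey : κ ^ ((d:ℝ) - s) ≤ 1/(2*Γ) := by
    have h1 : κ ^ ((d:ℝ) - s) ≤ κ₀ ^ ((d:ℝ) - s) :=
      Real.rpow_le_rpow (le_of_lt hκpos) (min_le_left _ _) (le_of_lt hds)
    have h2 : κ₀ ^ ((d:ℝ) - s) = (2*Γ) ^ ((-(1:ℝ)/((d:ℝ)-s)) * ((d:ℝ)-s)) := by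
      rw [hκ₀_def, ← Real.rpow_mul (by linarith)]
    have h3 : (-(1:ℝ)/((d:ℝ)-s)) * ((d:ℝ)-s) = -1 := by
      field_simp
    rw [h3] at h2
    have h4 : (2*Γ) ^ (-1 : ℝ) = 1/(2*Γ) := by
      rw [Real.rpow_neg_one]
      ring
    rw [h2, h4] at h1
    exact h1
  refine ⟨κ, hκpos, hκ1, ?_⟩
  intro x hx r hr hdiam
  by_contra hcon
  push_neg at hcon
  -- covering hypothesis applies at scale κ r, 3/2 r
  have hRd : ENNReal.ofReal ((3/2)*r) < 2 * EMetric.diam E := by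
    rcases eq_top_or_lt_top (EMetric.diam E) with h | h
    · rw [h]
      rw [ENNReal.mul_top (by norm_num)]
      exact ENNReal.ofReal_lt_top
    · have hDne : EMetric.diam E ≠ ⊤ := h.ne
      have hrD : r ≤ (EMetric.diam E).toReal :=
        (ENNReal.ofReal_le_iff_le_toReal hDne).mp hdiam
      set D := (EMetric.diam E).toReal with hD
      have hDpos : 0 < D := by linarith
      have h1 : (3/2)*r < 2*D := by linarith
      calc ENNReal.ofReal ((3/2)*r) < ENNReal.ofReal (2*D) :=
            (ENNReal.ofReal_lt_ofReal_iff (by linarith)).mpr h1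
        _ = 2 * ENNReal.ofReal D := by
            rw [ENNReal.ofReal_mul (by norm_num)]
            norm_num
        _ = 2 * EMetric.diam E := by
            rw [hD, ENNReal.ofReal_toReal hDne]
  obtain ⟨T, hTE, hTcov, hTcard⟩ :=
    hcov x hx (κ*r) ((3/2)*r) (by positivity) (by nlinarith) hRd
  -- grid points
  set z : (Fin d → ℤ) → EuclideanSpace ℝ (Fin d) :=
    fun j => (WithLp.toLp 2 (fun i => x i + 4*κ*r*(j i)) : EuclideanSpace ℝ (Fin d)) with hz_def
  set J : ℕ := ⌊1/(8*sd*κ)⌋₊ with hJ_def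
  have hupos : (0:ℝ) < 1/(8*sd*κ) := by positivity
  have hu2 : (2:ℝ) ≤ 1/(8*sd*κ) := by
    rw [le_div_iff₀ (by positivity)]
    have : 16*sd*κ ≤ 1 := by
      have := hκsd
      rw [div_eq_mul_inv] at this
      calc 16*sd*κ ≤ 16*sd*(1/(16*sd)) := by
            apply mul_le_mul_of_nonneg_left hκsd (by positivity)
        _ = 1 := by field_simp
    linarith
  have hJu : (J:ℝ) ≤ 1/(8*sd*κ) := Nat.floor_le (le_of_lt hupos)
  have hJl : 1/(16*sd*κ) ≤ (J:ℝ) := by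
    have h1 : 1/(8*sd*κ) - 1 < (J:ℝ) := Nat.sub_one_lt_floor _
    have h2 : 1/(16*sd*κ) = (1/(8*sd*κ))/2 := by
      field_simp
      ring
    rw [h2]
    linarith
  have hJpos : 0 < J := by
    have : (0:ℝ) < (J:ℝ) := by
      have : (0:ℝ) < 1/(16*sd*κ) := by positivity
      linarith
    exact_mod_cast this
  set JF : Finset (Fin d → ℤ) := Fintype.piFinset fun _ => Finset.Icc (1:ℤ) J with hJF_def
  have hJFcard : JF.card = J^d := by
    rw [hJF_def, Fintype.card_piFinset]
    have : (Finset.Icc (1:ℤ) J).card = J := by rw [Int.card_Icc]; omega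
    simp [this]
  have hzcoord : ∀ j : Fin d → ℤ, ∀ i, (z j - x) i = 4*κ*r*(j i) := by
    intro j i
    rw [sub_apply', hz_def]
    simp only [PiLp.toLp_apply]
    ring
  have hjbound : ∀ j ∈ JF, ∀ i : Fin d, |(j i : ℝ)| ≤ J := by
    intro j hj i
    rw [hJF_def, Fintype.mem_piFinset] at hj
    have := hj i
    rw [Finset.mem_Icc] at this
    rw [abs_le]
    constructor <;> [exact_mod_cast (by omega : -(J:ℤ) ≤ j i); exact_mod_cast this.2]
  have hz_ball : ∀ j ∈ JF, z j ∈ Metric.ball x r := by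
    intro j hj
    rw [Metric.mem_ball, dist_eq_norm]
    have h1 : ‖z j - x‖ ≤ sd * (4*κ*r*J) := by
      apply norm_le_of_coords _ (by positivity)
      intro i
      rw [hzcoord j i, abs_mul]
      have h2 := hjbound j hj i
      have h3 : |4*κ*r| = 4*κ*r := abs_of_pos (by positivity)
      rw [h3]
      apply mul_le_mul_of_nonneg_left h2 (by positivity)
    have h4 : sd * (4*κ*r*J) ≤ r/2 := by
      have h5 : sd * (4*κ*r) * (J:ℝ) ≤ sd * (4*κ*r) * (1/(8*sd*κ)) := by
        apply mul_le_mul_of_nonneg_left hJu (by positivity)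
      have h6 : sd * (4*κ*r) * (1/(8*sd*κ)) = r/2 := by
        field_simp
        ring
      calc sd * (4*κ*r*J) = sd * (4*κ*r) * (J:ℝ) := by ring
        _ ≤ r/2 := by rw [← h6]; exact h5
    linarith
  -- choose E points near grid points
  have hch : ∀ j ∈ JF, ∃ w, w ∈ Metric.ball (z j) (κ*r) ∩ E := by
    intro j hj
    exact hcon (z j) (hz_ball j hj)
  choose! e he using hch
  -- map into T
  have hmap : ∀ j ∈ JF, ∃ y ∈ T, e j ∈ Metric.ball y (κ*r) := by
    intro j hj
    obtain ⟨hb, hE⟩ := he j hj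
    have : e j ∈ E ∩ Metric.ball x ((3/2)*r) := by
      refine ⟨hE, ?_⟩
      rw [Metric.mem_ball]
      have h1 : dist (e j) (z j) < κ*r := Metric.mem_ball.mp hb
      have h2 : dist (z j) x < r := Metric.mem_ball.mp (hz_ball j hj)
      have h2' : dist (z j) x ≤ r/2 := by
        rw [dist_eq_norm]
        have h1' : ‖z j - x‖ ≤ sd * (4*κ*r*J) := by
          apply norm_le_of_coords _ (by positivity)
          intro i
          rw [hzcoord j i, abs_mul, abs_of_pos (by positivity : (0:ℝ) < 4*κ*r)]
          exact mul_le_mul_of_nonneg_left (hjbound j hj i) (by positivity)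
        have h5 : sd * (4*κ*r) * (J:ℝ) ≤ sd * (4*κ*r) * (1/(8*sd*κ)) :=
          mul_le_mul_of_nonneg_left hJu (by positivity)
        have h6 : sd * (4*κ*r) * (1/(8*sd*κ)) = r/2 := by field_simp; ring
        calc ‖z j - x‖ ≤ sd * (4*κ*r) * (J:ℝ) := by
              calc ‖z j - x‖ ≤ sd * (4*κ*r*J) := h1'
                _ = sd * (4*κ*r) * (J:ℝ) := by ring
          _ ≤ r/2 := by rw [← h6]; exact h5
      calc dist (e j) x ≤ dist (e j) (z j) + dist (z j) x := dist_triangle _ _ _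
        _ < κ*r + r/2 := by linarith
        _ ≤ (3/2)*r := by nlinarith
    have := hTcov this
    rw [Set.mem_iUnion₂] at this
    obtain ⟨y, hy, hball⟩ := this
    exact ⟨y, hy, hball⟩
  choose! φ hφT hφball using hmap
  have hinj : Set.InjOn φ JF := by
    intro j hj j' hj' heq
    by_contra hne
    have hne' : j ≠ j' := hne
    obtain ⟨i, hi⟩ := Function.ne_iff.mp hne'
    have hsep : 4*κ*r ≤ dist (z j) (z j') := by
      have h1 : |(z j - z j') i| ≤ ‖z j - z j'‖ := coord_le_norm _ i
      have h2 : (z j - z j') i = 4*κ*r*((j i : ℝ) - (j' i : ℝ)) := by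
        rw [sub_apply', hz_def]
        simp only [PiLp.toLp_apply]
        push_cast
        ring
      have h3 : (1:ℝ) ≤ |(j i : ℝ) - (j' i : ℝ)| := by
        have h4 : (1:ℤ) ≤ |j i - j' i| := Int.one_le_abs (sub_ne_zero.mpr hi)
        have h5 : ((1:ℤ):ℝ) ≤ ((|j i - j' i| : ℤ) : ℝ) := by exact_mod_cast h4
        rw [Int.cast_abs, Int.cast_sub] at h5
        exact_mod_cast h5
      have h5 : 4*κ*r ≤ |(z j - z j') i| := by
        rw [h2, abs_mul, abs_of_pos (show (0:ℝ) < 4*κ*r by positivity)]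
        have h6 := mul_le_mul_of_nonneg_left h3 (show (0:ℝ) ≤ 4*κ*r by positivity)
        linarith
      rw [dist_eq_norm]
      linarith
    have hd1 : dist (e j) (z j) < κ*r := Metric.mem_ball.mp (he j hj).1
    have hd2 : dist (e j') (z j') < κ*r := Metric.mem_ball.mp (he j' hj').1
    have hd3 : dist (e j) (φ j') < κ*r := by
      rw [← heq]
      exact Metric.mem_ball.mp (hφball j hj)
    have hd4 : dist (e j') (φ j') < κ*r := Metric.mem_ball.mp (hφball j' hj')
    have t1 : dist (z j) (z j') ≤ dist (z j) (e j) + dist (e j) (z j') := dist_triangle _ _ _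
    have t2 : dist (e j) (z j') ≤ dist (e j) (φ j') + dist (φ j') (z j') := dist_triangle _ _ _
    have t3 : dist (φ j') (z j') ≤ dist (φ j') (e j') + dist (e j') (z j') := dist_triangle _ _ _
    have c1 : dist (z j) (e j) = dist (e j) (z j) := dist_comm _ _
    have c2 : dist (φ j') (e j') = dist (e j') (φ j') := dist_comm _ _
    linarith
  -- cardinality chain
  have hcard1 : JF.card ≤ T.card := Finset.card_le_card_of_injOn φ (fun j hj => hφT j hj) hinj
  have hTbound : (T.card : ℝ) ≤ C * (3/(2*κ))^s := by
    have hbase : ((3/2)*r)/(κ*r) = 3/(2*κ) := by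
      field_simp
    rw [← hbase]
    exact hTcard
  have hκs : (0:ℝ) < κ ^ s := Real.rpow_pos_of_pos hκpos s
  have hκd : (0:ℝ) < κ ^ d := pow_pos hκpos d
  have h16pos : (0:ℝ) < (16*sd)^d := by positivity
  have hchain : (1/(16*sd*κ))^d ≤ C * (3/(2*κ))^s := by
    calc (1/(16*sd*κ))^d ≤ ((J:ℝ))^d := pow_le_pow_left₀ (by positivity) hJl d
      _ = ((J^d : ℕ) : ℝ) := by push_cast; ring
      _ = (JF.card : ℝ) := by rw [hJFcard]
      _ ≤ (T.card : ℝ) := by exact_mod_cast hcard1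
      _ ≤ C * (3/(2*κ))^s := hTbound
  have hrpow1 : (3/(2*κ):ℝ)^s ≤ (2/κ)^s := by
    apply Real.rpow_le_rpow (by positivity) _ (le_of_lt hs0)
    rw [div_le_div_iff₀ (by positivity) (by positivity)]
    nlinarith
  have hrpow2 : ((2:ℝ)/κ)^s = 2^s / κ^s :=
    Real.div_rpow (by norm_num : (0:ℝ) ≤ 2) (le_of_lt hκpos) s
  have hrpow3 : (2:ℝ)^s ≤ 2^(d:ℕ) := by
    rw [← Real.rpow_natCast 2 d]
    exact Real.rpow_le_rpow_of_exponent_le one_le_two (le_of_lt hsd)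
  have hchain2 : 1/((16*sd)^d * κ^d) ≤ C * 2^d / κ^s := by
    have e1 : (1/(16*sd*κ):ℝ)^d = 1/((16*sd)^d * κ^d) := by
      rw [div_pow, one_pow, mul_pow]
    rw [← e1]
    calc (1/(16*sd*κ):ℝ)^d ≤ C * (3/(2*κ))^s := hchain
      _ ≤ C * (2/κ)^s := mul_le_mul_of_nonneg_left hrpow1 (by linarith)
      _ = C * (2^s / κ^s) := by rw [hrpow2]
      _ ≤ C * (2^d / κ^s) := by
          gcongr
      _ = C * 2^d / κ^s := by ring
  have hA : κ^s ≤ Γ * κ^d := by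
    rw [div_le_div_iff₀ (by positivity) hκs] at hchain2
    rw [hΓ_def]
    nlinarith [hchain2]
  have hB : 2*Γ * κ^d ≤ κ^s := by
    have e2 : κ ^ ((d:ℝ) - s) = κ^d / κ^s := by
      rw [Real.rpow_sub hκpos, Real.rpow_natCast]
    rw [e2] at hkey
    rw [div_le_div_iff₀ hκs (by linarith)] at hkey
    nlinarith [hkey]
  have hpos : (0:ℝ) < Γ * κ^d := by positivity
  linarith

end PorAux

/-- A set `E ⊆ ℝ^d` is uniformly porous if and only if its upper Assouad dimension is
strictly less than `d`, the latter being expressed through covering counts: there are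
`C ≥ 1` and `s ∈ (0,d)` such that for all `x ∈ E` and `0 < r < R < 2 diam E` the set
`E ∩ B(x,R)` can be covered by at most `C (R/r)^s` balls of radius `r` centered in `E`. -/
theorem uniformly_porous_iff_assouad_lt_dim (d : ℕ) (hd : 1 ≤ d)
    (E : Set (EuclideanSpace ℝ (Fin d))) :
    (∃ κ : ℝ, 0 < κ ∧ κ ≤ 1 ∧ ∀ x ∈ E, ∀ r : ℝ, 0 < r → ENNReal.ofReal r ≤ EMetric.diam E →
      ∃ y ∈ ball x r, ball y (κ * r) ∩ E = ∅) ↔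
    (∃ C s : ℝ, 1 ≤ C ∧ 0 < s ∧ s < d ∧
      ∀ x ∈ E, ∀ r R : ℝ, 0 < r → r < R → ENNReal.ofReal R < 2 * EMetric.diam E →
        ∃ T : Finset (EuclideanSpace ℝ (Fin d)),
          (T : Set (EuclideanSpace ℝ (Fin d))) ⊆ E ∧
          E ∩ ball x R ⊆ ⋃ y ∈ T, ball y r ∧ (T.card : ℝ) ≤ C * (R / r) ^ s) := by
  constructor
  · rintro ⟨κ, hκ, hκ1, hpor⟩
    exact PorAux.forward_dir hd hκ hκ1 hpor
  · rintro ⟨C, s, hC, hs0, hsd, hcov⟩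
    exact PorAux.reverse_dir hd hC hs0 hsd hcov
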